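/- For every natural number k, the polynomial identity (1-x) · d/dx [ L_{k+1}(x) + L_k(x) ] = (k+1) · ((-1)^k / (2^k k!)) · d^k/dx^k [ (1-x)^{k+1} (1+x)^k ] holds in ℝ[x]; that is, the derivative of Φ_k(x) := L_{k+1}(x) + L_k(x) equals (k+1)·J_k^{1,0}(x), where J_k^{1,0} is the Jacobi polynomial with parameters (1,0) given by its Rodrigues formula. -/

import Mathlib

open Polynomial

noncomputable def legendre (n : ℕ) : Polynomial ℝ :=
  ((1 : ℝ) / (2 ^ n * n.factorial)) • (⇑derivative)^[n] ((X ^ 2 - 1) ^ n)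

private lemma iterD_add (n : ℕ) (p q : Polynomial ℝ) :
    (⇑derivative)^[n] (p + q) = (⇑derivative)^[n] p + (⇑derivative)^[n] q := by
  induction n generalizing p q with
  | zero => simp
  | succ m ih => simp [Function.iterate_succ_apply, derivative_add, ih]

private lemma iterD_X_mul (n : ℕ) (g : Polynomial ℝ) :
    (⇑derivative)^[n] (X * g)
      = X * (⇑derivative)^[n] g + C (n : ℝ) * (⇑derivative)^[n - 1] g := by
  induction n generalizing g with
  | zero => simp
  | succ m ih =>
    rw [Function.iterate_succ_apply, derivative_mul, derivative_X, one_mul, iterD_add,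
      ih (derivative g)]
    rw [Function.iterate_succ_apply]
    cases m with
    | zero => simp; ring
    | succ l =>
      have : (⇑derivative)^[l + 1 - 1] (derivative g) = (⇑derivative)^[l + 1] g := by
        simp [Function.iterate_succ_apply]
      rw [this]
      push_cast [C_add, C_1]
      ring

private lemma deriv_f : derivative (X^2 - 1 : Polynomial ℝ) = 2 * X := by
  have : (X^2 - 1 : Polynomial ℝ) = X*X - C 1 := by rw [C_1]; ring
  rw [this]
  simp only [derivative_sub, derivative_mul, derivative_X, derivative_C]
  ring

private lemma base (k : ℕ) :
    (X^2 - 1 : Polynomial ℝ) * derivative ((X^2 - 1)^k)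
      = C (2*(k:ℝ)) * (X * (X^2-1)^k) := by
  cases k with
  | zero => simp
  | succ n =>
    rw [derivative_pow, deriv_f]
    have h1 : ((X^2 - 1 : Polynomial ℝ))^(n+1-1) = (X^2-1)^n := rfl
    rw [h1]
    push_cast [C_add, C_1, C_mul, map_ofNat]
    ring

private lemma key' (k : ℕ) : ∀ j, j + 1 ≤ k →
    (X^2 - 1 : Polynomial ℝ) * derivative (derivative ((⇑derivative)^[j] ((X^2-1)^k)))
      = C (2*((k:ℝ) - j - 1)) * (X * derivative ((⇑derivative)^[j] ((X^2-1)^k)))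
        + C (((j:ℝ)+1)*(2*(k:ℝ) - j)) * (⇑derivative)^[j] ((X^2-1)^k) := by
  intro j
  induction j with
  | zero =>
    intro _
    have h := congrArg derivative (base k)
    rw [derivative_mul, deriv_f, derivative_C_mul, derivative_mul, derivative_X, one_mul] at h
    simp only [Function.iterate_zero_apply]
    simp only [Nat.cast_zero, Nat.cast_add, Nat.cast_one, C_mul, C_sub, C_add, C_1, C_0, map_ofNat] at *
    linear_combination h
  | succ m ih =>
    intro hm
    have h := congrArg derivative (ih (le_trans (Nat.le_succ _) hm))
    rw [derivative_mul, deriv_f, derivative_add, derivative_C_mul, derivative_C_mul,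
      derivative_mul, derivative_X, one_mul] at h
    simp only [Function.iterate_succ_apply']
    simp only [Nat.cast_zero, Nat.cast_add, Nat.cast_one, C_mul, C_sub, C_add, C_1, C_0, map_ofNat] at *
    linear_combination h

private lemma derivD (n : ℕ) (p : Polynomial ℝ) :
    derivative ((⇑derivative)^[n] p) = (⇑derivative)^[n] (derivative p) :=
  (Function.iterate_succ_apply' (⇑derivative) n p).symm.trans
    (Function.iterate_succ_apply (⇑derivative) n p)

private lemma iterD_sub (n : ℕ) (p q : Polynomial ℝ) :
    (⇑derivative)^[n] (p - q) = (⇑derivative)^[n] p - (⇑derivative)^[n] q := by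
  induction n generalizing p q with
  | zero => simp
  | succ m ih => simp [Function.iterate_succ_apply, derivative_sub, ih]

private lemma hkey (k : ℕ) :
    (X^2 - 1 : Polynomial ℝ) * (⇑derivative)^[k+1] ((X^2-1)^k)
      = C ((k:ℝ)*((k:ℝ)+1)) * (⇑derivative)^[k-1] ((X^2-1)^k) := by
  cases k with
  | zero => simp
  | succ n =>
    have h := key' (n+1) n (by omega)
    simp only [Function.iterate_succ_apply'] at h ⊢
    simp only [Nat.cast_add, Nat.cast_one, C_mul, C_sub, C_add, C_1, C_0, map_ofNat,
      Nat.add_sub_cancel] at h ⊢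
    linear_combination h

theorem deriv_phi_eq_jacobi_one_zero (k : ℕ) :
    (1 - X) * derivative (legendre (k + 1) + legendre k)
      = (((k : ℝ) + 1) * ((-1 : ℝ) ^ k / (2 ^ k * k.factorial))) •
          (⇑derivative)^[k] ((1 - X) ^ (k + 1) * (1 + X) ^ k) := by
  have hsign : ((-1:ℝ)^k) * ((-1:ℝ)^k) = 1 := by
    rw [← pow_add, ← two_mul, pow_mul]; norm_num
  have hprod : ((1 : Polynomial ℝ) - X)^(k+1) * (1+X)^k
      = C ((-1:ℝ)^k) * ((1-X) * (X^2-1)^k) := by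
    have h0 : C ((-1:ℝ)^k) = ((-1 : Polynomial ℝ))^k := by rw [map_pow, map_neg, map_one]
    have h1 : ((1:Polynomial ℝ)-X)*(1+X) = -(X^2-1) := by ring
    have h2 : ((1:Polynomial ℝ)-X)^(k+1)*(1+X)^k = (1-X)*(((1-X)*(1+X))^k) := by
      rw [mul_pow, pow_succ']; ring
    rw [h2, h1, neg_pow, h0]; ring
  have hc : (((k:ℝ)+1) * ((-1:ℝ)^k/(2^k * k.factorial))) * (-1:ℝ)^k
      = ((k:ℝ)+1) * ((1:ℝ)/(2^k * k.factorial)) := by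
    have hre : (((k:ℝ)+1) * ((-1:ℝ)^k/(2^k * k.factorial))) * (-1:ℝ)^k
        = ((k:ℝ)+1) * (((-1:ℝ)^k) * ((-1:ℝ)^k)) * ((1:ℝ)/(2^k * k.factorial)) := by ring
    rw [hre, hsign]; ring
  have hleib : (⇑derivative)^[k] (((1:Polynomial ℝ)-X) * (X^2-1)^k)
      = (1-X) * (⇑derivative)^[k] ((X^2-1)^k)
        - C (k:ℝ) * (⇑derivative)^[k-1] ((X^2-1)^k) := by
    have h3 : ((1:Polynomial ℝ)-X) * (X^2-1)^k = (X^2-1)^k - X * (X^2-1)^k := by ring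
    rw [h3, iterD_sub, iterD_X_mul]; ring
  have hDk : derivative (legendre k)
      = C ((1:ℝ)/(2^k*k.factorial)) * (⇑derivative)^[k+1] ((X^2-1)^k) := by
    unfold legendre
    rw [derivative_smul, smul_eq_C_mul]
    simp only [Function.iterate_succ_apply']
  have hDk1 : derivative (legendre (k+1))
      = C ((1:ℝ)/(2^k*k.factorial))
          * (X * (⇑derivative)^[k+1] ((X^2-1)^k)
            + C ((k:ℝ)+1) * (⇑derivative)^[k] ((X^2-1)^k)) := by
    unfold legendre
    rw [derivative_smul, smul_eq_C_mul]
    rw [derivD (k+1)]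
    have h2 : derivative ((X^2-1:Polynomial ℝ)^(k+1)) = C (2*((k:ℝ)+1)) * (X * (X^2-1)^k) := by
      rw [derivative_pow, deriv_f]
      have : ((X^2-1:Polynomial ℝ))^(k+1-1) = (X^2-1)^k := rfl
      rw [this]
      push_cast [C_mul, C_add, C_1, map_ofNat]
      ring
    rw [h2, iterate_derivative_C_mul, iterD_X_mul, ← mul_assoc, ← C_mul]
    have h3 : ((1:ℝ)/(2^(k+1)*(k+1).factorial)) * (2*((k:ℝ)+1)) = (1:ℝ)/(2^k*k.factorial) := by
      have hf0 : (k.factorial : ℝ) ≠ 0 := by positivity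
      rw [Nat.factorial_succ]
      push_cast
      field_simp
      ring
    rw [h3]
    have h4 : (⇑derivative)^[k+1-1] ((X^2-1:Polynomial ℝ)^k) = (⇑derivative)^[k] ((X^2-1)^k) := rfl
    rw [h4]
    push_cast
    ring
  rw [hprod, iterate_derivative_C_mul, smul_eq_C_mul, ← mul_assoc, ← C_mul, hc, hleib,
    derivative_add, hDk1, hDk]
  have h := hkey k
  simp only [C_mul, C_add, C_1] at h ⊢
  linear_combination (-(C ((1:ℝ)/(2^k * (k.factorial:ℝ))))) * h
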